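/- arXiv:0712.0833 — 5 statements merged into one kernel-verified Lean document; each statement's English description precedes it below -/
import Mathlib

section
/- Let D be a Dedekind domain, I = ∏ᵢ₌₁ⁿ Mᵢ^{eᵢ} a nonzero proper ideal with distinct maximal ideals Mᵢ, and let E be a Dedekind domain that is an integral extension of D such that for each i, the maximal ideals of E lying over Mᵢ are Pᵢ,₁,…,Pᵢ,ₛᵢ with MᵢE_{Pᵢⱼ} = Pᵢⱼ^{eᵢⱼ}E_{Pᵢⱼ}. Then IE = ∏ᵢ ∏ⱼ Pᵢⱼ^{eᵢ·eᵢⱼ}. -/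
open Ideal UniqueFactorizationMonoid in
theorem key_lemma {D E : Type*} [CommRing D] [IsDomain D] [IsDedekindDomain D]
    [CommRing E] [IsDomain E] [IsDedekindDomain E] [Algebra D E]
    (hinj : Function.Injective (algebraMap D E))
    (m : Ideal D) (hm : m.IsMaximal) (hm0 : m ≠ ⊥)
    {s : ℕ} (hs : 0 < s) (P : Fin s → Ideal E) (hPinj : Function.Injective P)
    (hPmax : ∀ j, (P j).IsMaximal)
    (hPover : ∀ j, (P j).comap (algebraMap D E) = m)
    (hPall : ∀ Q : Ideal E, Q.IsMaximal → Q.comap (algebraMap D E) = m → ∃ j, Q = P j) :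
    Ideal.map (algebraMap D E) m
      = ∏ j, P j ^ (Ideal.ramificationIdx' m (P j)) := by
  classical
  set f := algebraMap D E
  set J := Ideal.map f m with hJ
  have hJ0 : J ≠ ⊥ := by
    exact fun h => hm0 ((Ideal.map_eq_bot_iff_of_injective hinj).mp h)
  have hP0 : ∀ j, P j ≠ ⊥ := by
    intro j hbot
    apply hm0
    rw [← hPover j, hbot]
    have : Ideal.comap f (⊥ : Ideal E) = RingHom.ker f := rfl
    rw [this, (RingHom.injective_iff_ker_eq_bot f).mp hinj]
  have hfac : normalizedFactors J
      = ∑ j, Multiset.replicate (Ideal.ramificationIdx' m (P j)) (P j) := by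
    refine Multiset.ext.mpr fun Q => ?_
    rw [Multiset.count_sum']
    by_cases hQ : ∃ j, Q = P j
    · obtain ⟨j, rfl⟩ := hQ
      rw [Finset.sum_eq_single j]
      · rw [Multiset.count_replicate_self,
          ← Ideal.IsDedekindDomain.ramificationIdx'_eq_normalizedFactors_count hJ0
            (hPmax j).isPrime (hP0 j)]
      · intro k _ hk
        rw [Multiset.count_replicate, if_neg (fun h => hk (hPinj h))]
      · simp
    · have h1 : ∀ k ∈ Finset.univ, Multiset.count Q
          (Multiset.replicate (Ideal.ramificationIdx' m (P k)) (P k)) = 0 := by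
        intro k _
        rw [Multiset.count_replicate, if_neg (fun h => hQ ⟨k, h.symm⟩)]
      rw [Finset.sum_congr rfl h1, Finset.sum_const_zero, Multiset.count_eq_zero]
      intro hmem
      have hQp : Prime Q := prime_of_normalized_factor Q hmem
      have hQdvd : Q ∣ J := dvd_of_mem_normalizedFactors hmem
      have hJle : J ≤ Q := Ideal.le_of_dvd hQdvd
      have hQ0 : Q ≠ ⊥ := by
        rintro rfl
        exact hJ0 (le_bot_iff.mp hJle)
      have hQmax : Q.IsMaximal := Ideal.IsPrime.isMaximal (Ideal.isPrime_of_prime hQp) hQ0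
      have hcle : m ≤ Ideal.comap f Q := Ideal.map_le_iff_le_comap.mp hJle
      have hcover : Ideal.comap f Q = m :=
        (hm.eq_of_le (Ideal.comap_ne_top f hQmax.ne_top) hcle).symm
      obtain ⟨j, hj⟩ := hPall Q hQmax hcover
      exact hQ ⟨j, hj⟩
  calc J = (normalizedFactors J).prod := (_root_.prod_normalizedFactors_eq_self hJ0).symm
    _ = _ := by
        rw [hfac, Multiset.prod_sum]
        exact Finset.prod_congr rfl fun j _ => Multiset.prod_replicate _ _


/-- Let D ⊆ E be Dedekind domains with E integral over D, let
I = ∏ᵢ Mᵢ^{eᵢ} be a nonzero proper ideal of D with the Mᵢ distinct maximal ideals.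
Suppose that for each i the maximal ideals of E lying over Mᵢ are exactly
Pᵢ,₁, …, Pᵢ,ₛᵢ (distinct), with ramification index e(Pᵢⱼ/Mᵢ) = eᵢⱼ.
Then IE = ∏ᵢ ∏ⱼ Pᵢⱼ^{eᵢ·eᵢⱼ}. -/
theorem stmt3 {D E : Type*} [CommRing D] [IsDomain D] [IsDedekindDomain D]
    [CommRing E] [IsDomain E] [IsDedekindDomain E] [Algebra D E]
    (hinj : Function.Injective (algebraMap D E)) [Algebra.IsIntegral D E]
    {n : ℕ} (hn : 0 < n) (M : Fin n → Ideal D) (e : Fin n → ℕ)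
    (hMinj : Function.Injective M) (hmax : ∀ i, (M i).IsMaximal) (he : ∀ i, 0 < e i)
    (I : Ideal D) (hI0 : I ≠ ⊥) (hItop : I ≠ ⊤) (hI : I = ∏ i, M i ^ e i)
    (s : Fin n → ℕ) (hs : ∀ i, 0 < s i) (P : (i : Fin n) → Fin (s i) → Ideal E)
    (hPinj : ∀ i, Function.Injective (P i))
    (hPmax : ∀ i j, (P i j).IsMaximal)
    (hPover : ∀ i j, (P i j).comap (algebraMap D E) = M i)
    (hPall : ∀ (i : Fin n) (Q : Ideal E), Q.IsMaximal →
      Q.comap (algebraMap D E) = M i → ∃ j, Q = P i j)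
    (ee : (i : Fin n) → Fin (s i) → ℕ)
    (hee : ∀ i j, Ideal.ramificationIdx' (M i) (P i j) = ee i j) :
    Ideal.map (algebraMap D E) I = ∏ i, ∏ j, P i j ^ (e i * ee i j) := by
  classical
  have hM0 : ∀ i, M i ≠ ⊥ := by
    intro i hbot
    apply hI0
    rw [hI]
    exact Finset.prod_eq_zero (Finset.mem_univ i)
      (by rw [hbot]; exact zero_pow (he i).ne')
  have hkey : ∀ i, Ideal.map (algebraMap D E) (M i) = ∏ j, P i j ^ ee i j := by
    intro i
    rw [key_lemma hinj (M i) (hmax i) (hM0 i) (hs i) (P i) (hPinj i) (hPmax i)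
      (hPover i) (fun Q h1 h2 => hPall i Q h1 h2)]
    exact Finset.prod_congr rfl fun j _ => by rw [hee i j]
  have hmp : Ideal.map (algebraMap D E) (∏ i, M i ^ e i)
      = ∏ i, Ideal.map (algebraMap D E) (M i ^ e i) :=
    map_prod (Ideal.mapHom (algebraMap D E)) _ _
  rw [hI, hmp]
  refine Finset.prod_congr rfl fun i _ => ?_
  show Ideal.map (algebraMap D E) (M i ^ e i) = _
  rw [Ideal.map_pow, hkey i, ← Finset.prod_pow]
  exact Finset.prod_congr rfl fun j _ => by rw [← pow_mul, mul_comm (ee i j)]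
end

section
/- Let R be a Noetherian domain of Krull dimension one and I a nonzero proper ideal of R. Then there exists a finite integral extension domain A of R and a radical ideal H of A and positive integers m, n such that the integral closures of H^m and (IA)^n coincide; moreover H = Rad(IA). -/
/-- The integral closure `I_a` of an ideal `I` of `R` in `R`: the set of `x ∈ R`
satisfying an equation `xⁿ + a₁xⁿ⁻¹ + ⋯ + aₙ = 0` with `aᵢ ∈ Iⁱ`. -/
def integralClosureOfIdeal {R : Type*} [CommRing R] (I : Ideal R) : Set R :=
  {x | ∃ n : ℕ, 0 < n ∧ ∃ a : ℕ → R, (∀ i ∈ Finset.Icc 1 n, a i ∈ I ^ i) ∧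
    x ^ n + ∑ i ∈ Finset.Icc 1 n, a i * x ^ (n - i) = 0}

/-- A finite integral extension domain of `R`: an integral domain containing `R`
(the structure map is injective) which is a finitely generated `R`-module
(hence integral over `R`). -/
structure FiniteIntegralExtensionDomain (R : Type u) [CommRing R] : Type (u + 1) where
  carrier : Type u
  [commRing : CommRing carrier]
  [isDomain : IsDomain carrier]
  [algebra : Algebra R carrier]
  injective : Function.Injective (algebraMap R carrier)
  finite : Module.Finite R carrier

attribute [instance] FiniteIntegralExtensionDomain.commRing
  FiniteIntegralExtensionDomain.isDomain FiniteIntegralExtensionDomain.algebra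

/-! ### Auxiliary theory of integral closures of ideals -/

namespace StmtSeven

open Ideal

variable {A : Type*} [CommRing A]

theorem mem_cl_of_mem {L : Ideal A} {z : A} (hz : z ∈ L) :
    z ∈ integralClosureOfIdeal L := by
  refine ⟨1, one_pos, fun _ => -z, ?_, ?_⟩
  · intro i hi
    simp only [Finset.mem_Icc] at hi
    obtain rfl : i = 1 := le_antisymm hi.2 hi.1
    simpa using neg_mem hz
  · simp

theorem ideal_pow_mono {L₁ L₂ : Ideal A} (h : L₁ ≤ L₂) : ∀ i, L₁ ^ i ≤ L₂ ^ i
  | 0 => le_of_eq (by simp)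
  | (i + 1) => by
      rw [pow_succ, pow_succ]
      exact Ideal.mul_mono (ideal_pow_mono h i) h

theorem cl_mono {L₁ L₂ : Ideal A} (h : L₁ ≤ L₂) :
    integralClosureOfIdeal L₁ ⊆ integralClosureOfIdeal L₂ := by
  rintro z ⟨n, hn, a, ha, he⟩
  exact ⟨n, hn, a, fun i hi => ideal_pow_mono h i (ha i hi), he⟩

/-- If `z ^ s ∈ L ^ s` then `z` is integral over `L`. -/
theorem mem_cl_of_pow_mem {L : Ideal A} {z : A} {s : ℕ} (hs : 0 < s)
    (h : z ^ s ∈ L ^ s) : z ∈ integralClosureOfIdeal L := by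
  refine ⟨s, hs, fun i => if i = s then -(z ^ s) else 0, ?_, ?_⟩
  · intro i hi
    by_cases hi' : i = s
    · subst hi'; simpa using neg_mem h
    · simp [hi']
  · rw [Finset.sum_eq_single s]
    · simp
    · intro b hb hbs; simp [hbs]
    · intro hns
      exact absurd (Finset.mem_Icc.mpr ⟨hs, le_refl s⟩) hns

theorem mul_mem_cl {L : Ideal A} {z : A} (hz : z ∈ integralClosureOfIdeal L) (r : A) :
    r * z ∈ integralClosureOfIdeal L := by
  obtain ⟨n, hn, a, ha, he⟩ := hz
  refine ⟨n, hn, fun i => r ^ i * a i, fun i hi => Ideal.mul_mem_left _ _ (ha i hi), ?_⟩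
  have : ∀ i ∈ Finset.Icc 1 n, r ^ i * a i * (r * z) ^ (n - i) = r ^ n * (a i * z ^ (n - i)) := by
    intro i hi
    simp only [Finset.mem_Icc] at hi
    rw [mul_pow, ← mul_assoc, mul_comm (r ^ i * a i) (r ^ (n - i)), ← mul_assoc,
      ← pow_add, Nat.sub_add_cancel hi.2]
    ring
  rw [Finset.sum_congr rfl this, ← Finset.mul_sum, mul_pow, mul_comm (r ^ n) (z ^ n),
    ← mul_comm (r ^ n) (z ^ n), ← mul_add, he, mul_zero]

section Core

variable [IsDomain A] [IsNoetherianRing A]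

/-- Determinant trick: if `M ≠ ⊥` and `z • M ⊆ L * M` then `z` is integral over `L`. -/
theorem mem_cl_of_span_mul_le {L M : Ideal A} (hM : M ≠ ⊥) {z : A}
    (h : Ideal.span {z} * M ≤ L * M) : z ∈ integralClosureOfIdeal L := by
  haveI : Module.Finite A M := Module.Finite.iff_fg.mpr (IsNoetherian.noetherian M)
  -- the endomorphism `z • id` of `M` has range inside `L • M`
  have key : ∀ x, x ∈ L * M → ∃ hx : x ∈ M, (⟨x, hx⟩ : M) ∈ L • (⊤ : Submodule A M) := by
    intro x hx
    rw [← Ideal.smul_eq_mul] at hx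
    refine Submodule.smul_induction_on hx ?_ ?_
    · intro r hr n hn
      refine ⟨Submodule.smul_mem _ r hn, ?_⟩
      have : (⟨r • n, Submodule.smul_mem _ r hn⟩ : M) = r • (⟨n, hn⟩ : M) := rfl
      rw [this]
      exact Submodule.smul_mem_smul hr trivial
    · rintro x y ⟨hx, hx'⟩ ⟨hy, hy'⟩
      refine ⟨add_mem hx hy, ?_⟩
      have : (⟨x + y, add_mem hx hy⟩ : M) = (⟨x, hx⟩ : M) + (⟨y, hy⟩ : M) := rfl
      rw [this]
      exact Submodule.add_mem _ hx' hy'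
  have hf : LinearMap.range (z • (LinearMap.id : M →ₗ[A] M)) ≤ L • (⊤ : Submodule A M) := by
    rintro _ ⟨m, rfl⟩
    have h1 : z * (m : A) ∈ L * M :=
      h (Ideal.mul_mem_mul (Ideal.subset_span rfl) m.2)
    obtain ⟨hx, hx'⟩ := key _ h1
    have : (z • (LinearMap.id : M →ₗ[A] M)) m = ⟨z * (m : A), hx⟩ := rfl
    rw [this]
    exact hx'
  obtain ⟨p, hmonic, -, hcoeff, heval⟩ :=
    LinearMap.exists_monic_and_coeff_mem_pow_and_aeval_eq_zero_of_range_le_smul A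
      (z • (LinearMap.id : M →ₗ[A] M)) L hf
  -- conclude `p.eval z = 0`
  have hz0 : p.eval z = 0 := by
    obtain ⟨m₀, hm₀, hm₀0⟩ := Submodule.ne_bot_iff _ |>.mp hM
    have : Polynomial.aeval (z • (LinearMap.id : M →ₗ[A] M)) p =
        algebraMap A (Module.End A M) (p.eval z) := by
      rw [show (z • (LinearMap.id : M →ₗ[A] M)) = algebraMap A (Module.End A M) z from rfl]
      exact Polynomial.aeval_algebraMap_apply_eq_algebraMap_eval z p
    rw [this] at heval
    have h2 : (algebraMap A (Module.End A M) (p.eval z)) ⟨m₀, hm₀⟩ = 0 := by rw [heval]; rfl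
    rw [Module.algebraMap_end_apply] at h2
    have h3 : p.eval z * m₀ = 0 := by
      have := congrArg (fun (x : M) => (x : A)) h2
      simpa using this
    rcases mul_eq_zero.mp h3 with h4 | h4
    · exact h4
    · exact absurd h4 hm₀0
  -- the degree is positive
  have hn : 0 < p.natDegree := by
    rcases Nat.eq_zero_or_pos p.natDegree with h0 | h0
    · exfalso
      have : p = 1 := hmonic.natDegree_eq_zero.mp h0
      rw [this] at hz0
      simp at hz0
    · exact h0
  set n := p.natDegree with hndef
  refine ⟨n, hn, fun i => p.coeff (n - i), ?_, ?_⟩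
  · intro i hi
    simp only [Finset.mem_Icc] at hi
    have := hcoeff (n - i)
    rwa [Nat.sub_sub_self hi.2] at this
  · -- `z ^ n + ∑ i in Icc 1 n, coeff (n - i) * z ^ (n - i) = p.eval z = 0`
    have he : p.eval z = ∑ k ∈ Finset.range (n + 1), p.coeff k * z ^ k :=
      Polynomial.eval_eq_sum_range' (Nat.lt_succ_self n) z
    have hsum : ∑ i ∈ Finset.Icc 1 n, p.coeff (n - i) * z ^ (n - i) =
        ∑ k ∈ Finset.range n, p.coeff k * z ^ k := by
      refine Finset.sum_nbij' (fun i => n - i) (fun k => n - k) ?_ ?_ ?_ ?_ ?_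
      · intro i hi
        simp only [Finset.mem_Icc] at hi
        exact Finset.mem_range.mpr (by omega)
      · intro k hk
        simp only [Finset.mem_range] at hk
        exact Finset.mem_Icc.mpr (by omega)
      · intro i hi
        simp only [Finset.mem_Icc] at hi
        omega
      · intro k hk
        simp only [Finset.mem_range] at hk
        omega
      · intro i _
        rfl
    rw [hsum, ← hz0, he, Finset.sum_range_succ]
    rw [Polynomial.Monic.coeff_natDegree hmonic]
    ring

/-- Converse of the determinant trick. -/
theorem exists_span_mul_le {L : Ideal A} {z : A} (hz : z ∈ integralClosureOfIdeal L) :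
    ∃ M : Ideal A, M ≠ ⊥ ∧ Ideal.span {z} * M ≤ L * M := by
  by_cases h0 : z = 0
  · refine ⟨⊤, top_ne_bot, ?_⟩
    subst h0
    rw [Ideal.span_singleton_eq_bot.mpr rfl, bot_mul]
    exact bot_le
  obtain ⟨n, hn, a, ha, he⟩ := hz
  set Z := Ideal.span {z} with hZ
  set M := (L + Z) ^ (n - 1) with hMdef
  have claim1 : ∀ k : ℕ, Z * (L + Z) ^ k ≤ L * (L + Z) ^ k + Z ^ (k + 1) := by
    intro k
    induction k with
    | zero => simpa using le_sup_right
    | succ k ih =>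
        have : Z * (L + Z) ^ (k + 1) = Z * (L + Z) ^ k * (L + Z) := by ring
        rw [this]
        refine le_trans (Ideal.mul_mono ih (le_refl (L + Z))) ?_
        rw [add_mul]
        have h1 : L * (L + Z) ^ k * (L + Z) = L * (L + Z) ^ (k + 1) := by ring
        rw [h1]
        refine sup_le le_sup_left ?_
        rw [mul_add]
        refine sup_le ?_ ?_
        · -- Z ^ (k+1) * L ≤ L * (L+Z)^(k+1)
          refine le_trans (le_of_eq (mul_comm _ _)) ?_
          refine le_sup_of_le_left ?_
          exact Ideal.mul_mono (le_refl L) (ideal_pow_mono le_sup_right (k + 1))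
        · have : Z ^ (k + 1) * Z = Z ^ (k + 2) := by ring
          rw [this]
          exact le_sup_right
  have claim2 : Z ^ n ≤ L * M := by
    rw [hZ, Ideal.span_singleton_pow]
    rw [Ideal.span_le]
    intro x hx
    rcases hx with rfl
    -- `z ^ n = -∑ a i * z ^ (n - i) ∈ L * M`
    have hzn : (z : A) ^ n = -∑ i ∈ Finset.Icc 1 n, a i * z ^ (n - i) :=
      eq_neg_of_add_eq_zero_left he
    rw [SetLike.mem_coe, hzn]
    refine neg_mem (Submodule.sum_mem _ ?_)
    intro i hi
    simp only [Finset.mem_Icc] at hi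
    have h1 : a i * z ^ (n - i) ∈ L ^ i * Z ^ (n - i) := by
      refine Ideal.mul_mem_mul (ha i (Finset.mem_Icc.mpr hi)) ?_
      rw [hZ, Ideal.span_singleton_pow]
      exact Ideal.subset_span rfl
    refine Set.mem_of_mem_of_subset h1 ?_
    have h2 : L ^ i * Z ^ (n - i) = L * (L ^ (i - 1) * Z ^ (n - i)) := by
      rw [← mul_assoc, ← pow_succ']
      congr 2
      omega
    rw [h2]
    refine Ideal.mul_mono (le_refl L) ?_
    refine le_trans (Ideal.mul_mono (ideal_pow_mono (le_sup_left : L ≤ L + Z) (i - 1))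
      (ideal_pow_mono (le_sup_right : Z ≤ L + Z) (n - i))) ?_
    rw [← pow_add]
    rw [hMdef]
    exact ideal_pow_mono (le_refl _) _ |>.trans (le_of_eq (by congr 1; omega))
  refine ⟨M, ?_, ?_⟩
  · intro hbot
    have h1 : z ^ (n - 1) ∈ M := by
      have : Z ^ (n - 1) ≤ M := ideal_pow_mono le_sup_right (n - 1)
      exact this (by rw [hZ, Ideal.span_singleton_pow]; exact Ideal.subset_span rfl)
    rw [hbot] at h1
    exact pow_ne_zero _ h0 (Submodule.mem_bot A |>.mp h1)
  · have h1 : Z * M ≤ L * M + Z ^ n := by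
      have := claim1 (n - 1)
      rw [hMdef]
      have hn1 : n - 1 + 1 = n := by omega
      rwa [hn1] at this
    refine le_trans h1 ?_
    exact sup_le (le_refl _) claim2

/-- Helper: a finite sum of ideals is `≤ V` if each summand is. -/
theorem ideal_sum_le {ι : Type*} (s : Finset ι) (f : ι → Ideal A) (V : Ideal A)
    (h : ∀ j ∈ s, f j ≤ V) : (∑ j ∈ s, f j) ≤ V := by
  classical
  induction s using Finset.induction_on with
  | empty => simp
  | insert _ _ hx ih =>
      rename_i a t
      rw [Finset.sum_insert hx]
      rw [Ideal.add_eq_sup]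
      exact sup_le (h a (Finset.mem_insert_self a t))
        (ih fun j hj => h j (Finset.mem_insert_of_mem hj))

theorem add_mem_cl {L : Ideal A} {z w : A} (hz : z ∈ integralClosureOfIdeal L)
    (hw : w ∈ integralClosureOfIdeal L) : z + w ∈ integralClosureOfIdeal L := by
  obtain ⟨M₁, hM₁, h₁⟩ := exists_span_mul_le hz
  obtain ⟨M₂, hM₂, h₂⟩ := exists_span_mul_le hw
  refine mem_cl_of_span_mul_le (M := M₁ * M₂) ?_ ?_
  · exact fun h => (Ideal.mul_eq_bot.mp h).elim hM₁ hM₂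
  · have hle : Ideal.span {z + w} ≤ Ideal.span {z} + Ideal.span {w} := by
      rw [Ideal.span_le]
      rintro x rfl
      exact Submodule.add_mem_sup (Ideal.subset_span rfl) (Ideal.subset_span rfl)
    refine le_trans (Ideal.mul_mono hle (le_refl _)) ?_
    rw [add_mul]
    refine sup_le ?_ ?_
    · calc Ideal.span {z} * (M₁ * M₂) = Ideal.span {z} * M₁ * M₂ := by ring
        _ ≤ L * M₁ * M₂ := Ideal.mul_mono h₁ (le_refl _)
        _ = L * (M₁ * M₂) := by ring
    · calc Ideal.span {w} * (M₁ * M₂) = Ideal.span {w} * M₂ * M₁ := by ring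
        _ ≤ L * M₂ * M₁ := Ideal.mul_mono h₂ (le_refl _)
        _ = L * (M₁ * M₂) := by ring

theorem sum_mem_cl {ι : Type*} {L : Ideal A} (s : Finset ι) (f : ι → A)
    (h : ∀ j ∈ s, f j ∈ integralClosureOfIdeal L) :
    (∑ j ∈ s, f j) ∈ integralClosureOfIdeal L := by
  classical
  induction s using Finset.induction_on with
  | empty => simpa using mem_cl_of_mem (Submodule.zero_mem L)
  | insert _ _ hx ih =>
      rename_i a t
      rw [Finset.sum_insert hx]
      exact add_mem_cl (h a (Finset.mem_insert_self a t))
        (ih fun j hj => h j (Finset.mem_insert_of_mem hj))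

theorem mul_mem_cl_mul {L₁ L₂ : Ideal A} {z w : A} (hz : z ∈ integralClosureOfIdeal L₁)
    (hw : w ∈ integralClosureOfIdeal L₂) : z * w ∈ integralClosureOfIdeal (L₁ * L₂) := by
  obtain ⟨M₁, hM₁, h₁⟩ := exists_span_mul_le hz
  obtain ⟨M₂, hM₂, h₂⟩ := exists_span_mul_le hw
  refine mem_cl_of_span_mul_le (M := M₁ * M₂) ?_ ?_
  · exact fun h => (Ideal.mul_eq_bot.mp h).elim hM₁ hM₂
  · calc Ideal.span {z * w} * (M₁ * M₂)
        = (Ideal.span {z} * M₁) * (Ideal.span {w} * M₂) := by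
          rw [← Ideal.span_singleton_mul_span_singleton]; ring
    _ ≤ (L₁ * M₁) * (L₂ * M₂) := Ideal.mul_mono h₁ h₂
    _ = (L₁ * L₂) * (M₁ * M₂) := by ring

theorem pow_mem_cl_pow {L : Ideal A} {z : A} (hz : z ∈ integralClosureOfIdeal L) :
    ∀ k, z ^ k ∈ integralClosureOfIdeal (L ^ k)
  | 0 => by
      rw [pow_zero, pow_zero]
      exact mem_cl_of_mem (by simp [Ideal.one_eq_top])
  | (k + 1) => by
      rw [pow_succ, pow_succ]
      exact mul_mem_cl_mul (pow_mem_cl_pow hz k) hz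

/-- Transitivity: if every element of `L'` is integral over `L`, then everything
integral over `L'` is integral over `L`. -/
theorem cl_trans {L' L : Ideal A} (hL' : (L' : Set A) ⊆ integralClosureOfIdeal L)
    {z : A} (hz : z ∈ integralClosureOfIdeal L') : z ∈ integralClosureOfIdeal L := by
  classical
  -- first: a combined certificate for a finite set of elements of `cl L`
  have aux : ∀ s : Finset A, (↑s : Set A) ⊆ integralClosureOfIdeal L →
      ∃ M : Ideal A, M ≠ ⊥ ∧ Ideal.span (↑s : Set A) * M ≤ L * M := by
    intro s
    induction s using Finset.induction_on with
    | empty =>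
        intro _
        refine ⟨⊤, top_ne_bot, ?_⟩
        simp
    | insert _ _ hx ih =>
        rename_i u t
        intro hsub
        obtain ⟨M₁, hM₁, h₁⟩ := exists_span_mul_le
          (hsub (by simp : u ∈ (↑(insert u t) : Set A)))
        obtain ⟨M₂, hM₂, h₂⟩ := ih fun y hy => hsub (by
          simp only [Finset.coe_insert, Set.mem_insert_iff]
          exact Or.inr hy)
        refine ⟨M₁ * M₂, fun h => (Ideal.mul_eq_bot.mp h).elim hM₁ hM₂, ?_⟩
        rw [Finset.coe_insert, Ideal.span_insert]
        rw [Ideal.sup_mul]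
        refine sup_le ?_ ?_
        · calc Ideal.span {u} * (M₁ * M₂) = Ideal.span {u} * M₁ * M₂ := by ring
            _ ≤ L * M₁ * M₂ := Ideal.mul_mono h₁ (le_refl _)
            _ = L * (M₁ * M₂) := by ring
        · calc Ideal.span (↑t : Set A) * (M₁ * M₂)
              = Ideal.span (↑t : Set A) * M₂ * M₁ := by ring
            _ ≤ L * M₂ * M₁ := Ideal.mul_mono h₂ (le_refl _)
            _ = L * (M₁ * M₂) := by ring
  obtain ⟨M', hM', hzM'⟩ := exists_span_mul_le hz
  obtain ⟨s, hs⟩ := IsNoetherian.noetherian L'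
  have hssub : (↑s : Set A) ⊆ integralClosureOfIdeal L := by
    intro y hy
    refine hL' ?_
    rw [← hs]
    exact Ideal.subset_span hy
  obtain ⟨Ms, hMs, hsM⟩ := aux s hssub
  refine mem_cl_of_span_mul_le (M := M' * Ms)
    (fun h => (Ideal.mul_eq_bot.mp h).elim hM' hMs) ?_
  calc Ideal.span {z} * (M' * Ms) = Ideal.span {z} * M' * Ms := by ring
    _ ≤ L' * M' * Ms := Ideal.mul_mono hzM' (le_refl _)
    _ = Ideal.span (↑s : Set A) * Ms * M' := by rw [show Ideal.span (↑s : Set A) = L' from hs]; ring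
    _ ≤ L * Ms * M' := Ideal.mul_mono hsM (le_refl _)
    _ = L * (M' * Ms) := by ring

/-- Root extraction: if `z ^ k` is integral over `L ^ k` (`k ≥ 1`, `L ≠ ⊥`),
then `z` is integral over `L`. -/
theorem mem_cl_of_pow_mem_cl_pow {L : Ideal A} (hL : L ≠ ⊥) {z : A} {k : ℕ} (hk : 0 < k)
    (h : z ^ k ∈ integralClosureOfIdeal (L ^ k)) : z ∈ integralClosureOfIdeal L := by
  obtain ⟨M, hM, hMle⟩ := exists_span_mul_le h
  set M' : Ideal A := ∑ j ∈ Finset.range k, Ideal.span {z} ^ j * (L ^ (k - 1 - j) * M)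
    with hM'def
  have hterm : ∀ j ∈ Finset.range k,
      Ideal.span {z} ^ j * (L ^ (k - 1 - j) * M) ≤ M' := by
    intro j hj
    rw [hM'def]
    exact Finset.single_le_sum (f := fun j => Ideal.span {z} ^ j * (L ^ (k - 1 - j) * M))
      (fun i _ => bot_le) hj
  have key : Ideal.span {z} * M' ≤ L * M' := by
    rw [hM'def, Finset.mul_sum]
    refine ideal_sum_le _ _ _ ?_
    intro j hj
    simp only [Finset.mem_range] at hj
    by_cases hjk : j = k - 1
    · subst hjk
      have h1 : Ideal.span {z} * (Ideal.span {z} ^ (k - 1) * (L ^ (k - 1 - (k - 1)) * M))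
          = Ideal.span {z} ^ k * M := by
        have e1 : k - 1 - (k - 1) = 0 := by omega
        rw [e1, pow_zero, Ideal.one_eq_top, top_mul, ← mul_assoc, ← pow_succ']
        congr 2
        omega
      rw [h1, Ideal.span_singleton_pow]
      refine le_trans hMle ?_
      have h2 : L ^ k * M = L * (Ideal.span {z} ^ 0 * (L ^ (k - 1 - 0) * M)) := by
        rw [pow_zero, Ideal.one_eq_top, top_mul, ← mul_assoc, ← pow_succ']
        congr 2
        omega
      rw [h2]
      exact Ideal.mul_mono (le_refl L) (hterm 0 (Finset.mem_range.mpr hk))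
    · have h1 : Ideal.span {z} * (Ideal.span {z} ^ j * (L ^ (k - 1 - j) * M))
          = L * (Ideal.span {z} ^ (j + 1) * (L ^ (k - 1 - (j + 1)) * M)) := by
        have e1 : k - 1 - j = (k - 1 - (j + 1)) + 1 := by omega
        rw [e1, pow_succ']
        ring
      rw [h1]
      exact Ideal.mul_mono (le_refl L) (hterm (j + 1) (Finset.mem_range.mpr (by omega)))
  by_cases hz0 : z = 0
  · subst hz0
    exact mem_cl_of_mem (Submodule.zero_mem L)
  refine mem_cl_of_span_mul_le (M := M') ?_ key
  -- M' ≠ ⊥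
  intro hbot
  obtain ⟨m₀, hm₀, hm₀0⟩ := Submodule.ne_bot_iff _ |>.mp hM
  obtain ⟨l₀, hl₀, hl₀0⟩ := Submodule.ne_bot_iff _ |>.mp hL
  have h1 : l₀ ^ (k - 1) * m₀ ∈ M' := by
    refine hterm 0 (Finset.mem_range.mpr hk) ?_
    rw [pow_zero, Ideal.one_eq_top, top_mul]
    have e2 : (k - 1 - 0) = k - 1 := by omega
    rw [e2]
    exact Ideal.mul_mem_mul (Ideal.pow_mem_pow hl₀ _) hm₀
  rw [hbot] at h1
  have := Submodule.mem_bot A |>.mp h1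
  exact (mul_ne_zero (pow_ne_zero _ hl₀0) hm₀0) this

end Core

end StmtSeven

namespace StmtSeven

section Binomial

variable {A : Type*} [CommRing A] [IsDomain A] [IsNoetherianRing A]

theorem ideal_pow_ne_bot {J : Ideal A} (hJ : J ≠ ⊥) : ∀ i, J ^ i ≠ ⊥
  | 0 => by
      rw [pow_zero, Ideal.one_eq_top]
      exact top_ne_bot
  | (i + 1) => by
      rw [pow_succ]
      exact fun h => (Ideal.mul_eq_bot.mp h).elim (ideal_pow_ne_bot hJ i) hJ

/-- If `z ^ N` and `w ^ N` are integral over `V`, so is `(z + w) ^ N`. -/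
theorem add_pow_mem_cl {V : Ideal A} (hV : V ≠ ⊥) {NN : ℕ} (hNN : 0 < NN) {z w : A}
    (hz : z ^ NN ∈ integralClosureOfIdeal V) (hw : w ^ NN ∈ integralClosureOfIdeal V) :
    (z + w) ^ NN ∈ integralClosureOfIdeal V := by
  rw [add_pow]
  apply sum_mem_cl
  intro k hk
  simp only [Finset.mem_range] at hk
  have hkN : k ≤ NN := by omega
  have h1 : z ^ k * w ^ (NN - k) ∈ integralClosureOfIdeal V := by
    apply mem_cl_of_pow_mem_cl_pow hV hNN
    have h2 : (z ^ k * w ^ (NN - k)) ^ NN = (z ^ NN) ^ k * (w ^ NN) ^ (NN - k) := by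
      rw [mul_pow, ← pow_mul, ← pow_mul, ← pow_mul, ← pow_mul, Nat.mul_comm k NN,
        Nat.mul_comm (NN - k) NN]
    rw [h2]
    have h3 := mul_mem_cl_mul (pow_mem_cl_pow hz k) (pow_mem_cl_pow hw (NN - k))
    rwa [← pow_add, Nat.add_sub_cancel' hkN] at h3
  have := mul_mem_cl h1 ((NN.choose k : A))
  rwa [mul_comm] at this

end Binomial

end StmtSeven

theorem Algebra.adjoin_induction' {R A : Type*} [CommSemiring R] [Semiring A] [Algebra R A]
    {s : Set A} {p : Algebra.adjoin R s → Prop}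
    (mem : ∀ (x) (h : x ∈ s), p ⟨x, Algebra.subset_adjoin h⟩)
    (algebraMap : ∀ r, p (algebraMap R _ r))
    (add : ∀ x y, p x → p y → p (x + y)) (mul : ∀ x y, p x → p y → p (x * y))
    (x : Algebra.adjoin R s) : p x := by
  obtain ⟨x, hx⟩ := x
  induction hx using Algebra.adjoin_induction with
  | mem x h => exact mem x h
  | algebraMap r => exact algebraMap r
  | add x y hx hy h1 h2 => exact add _ _ h1 h2
  | mul x y hx hy h1 h2 => exact mul _ _ h1 h2

set_option maxHeartbeats 2000000 in
set_option synthInstance.maxHeartbeats 1000000 in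
/-- Let R be a Noetherian domain of Krull dimension one and I a nonzero
proper ideal of R. Then there exists a finite integral extension domain A of R and a
radical ideal H of A and positive integers m, n such that (H^m)_a = ((IA)^n)_a
(i.e. H is projectively equivalent to IA); moreover H = Rad(IA). -/
theorem stmt7 {R : Type u} [CommRing R] [IsDomain R] [IsNoetherianRing R]
    (hdim : ringKrullDim R = 1) (I : Ideal R) (hI0 : I ≠ ⊥) (hItop : I ≠ ⊤) :
    ∃ (A : FiniteIntegralExtensionDomain R) (H : Ideal A.carrier) (m n : ℕ),
      0 < m ∧ 0 < n ∧
      integralClosureOfIdeal (H ^ m) =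
        integralClosureOfIdeal ((I.map (algebraMap R A.carrier)) ^ n) ∧
      H = (I.map (algebraMap R A.carrier)).radical := by
  classical
  open StmtSeven in
  -- generators of `I`
  obtain ⟨s, hsI₀⟩ := IsNoetherian.noetherian I
  have hsI : Ideal.span (↑s : Set R) = I := hsI₀
  -- radical exponent: `I.radical ^ ν ≤ I`
  obtain ⟨ν, hν⟩ := Ideal.exists_radical_pow_le_of_fg I (IsNoetherian.noetherian _)
  set N := max ν 1 with hNdef
  have hNpos : 0 < N := lt_of_lt_of_le one_pos (le_max_right _ _)
  have hradN : I.radical ^ N ≤ I := le_trans (Ideal.pow_le_pow_right (le_max_left _ _)) hν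
  -- the ambient algebraically closed field
  let K := FractionRing R
  let Ω := AlgebraicClosure K
  letI : Algebra R Ω := ((algebraMap K Ω).comp (algebraMap R K)).toAlgebra
  have hinj : Function.Injective (algebraMap R Ω) := by
    have h1 : Function.Injective (algebraMap R K) := IsFractionRing.injective R K
    have h2 : Function.Injective (algebraMap K Ω) := (algebraMap K Ω).injective
    exact h2.comp h1
  -- `N`-th roots of all elements of `R`
  have hroot : ∀ a : R, ∃ x : Ω, x ^ N = algebraMap R Ω a := fun a =>
    IsAlgClosed.exists_pow_nat_eq _ hNpos
  choose α hα using hroot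
  set S : Set Ω := (fun a => α a) '' (↑s : Set R) with hS
  have hSfin : S.Finite := s.finite_toSet.image _
  have hSint : ∀ x ∈ S, IsIntegral R x := by
    rintro x ⟨a, _, rfl⟩
    refine ⟨Polynomial.X ^ N - Polynomial.C a, Polynomial.monic_X_pow_sub_C a (by omega), ?_⟩
    simp [Polynomial.eval₂_sub, hα, sub_eq_zero]
  set Asub : Subalgebra R Ω := Algebra.adjoin R S with hAsubdef
  have hfg : Asub.toSubmodule.FG := fg_adjoin_of_finite hSfin hSint
  haveI hfin : Module.Finite R Asub := by
    have h : Module.Finite R (Subalgebra.toSubmodule Asub) := Module.Finite.iff_fg.mpr hfg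
    exact h
  have hinj' : Function.Injective (algebraMap R Asub) := by
    intro x y hxy
    apply hinj
    exact congrArg Subtype.val hxy
  haveI : IsNoetherianRing Asub := Algebra.FiniteType.isNoetherianRing R Asub
  let AA : FiniteIntegralExtensionDomain R := ⟨Asub, hinj', hfin⟩
  -- main objects inside `Asub`
  set J : Ideal Asub := I.map (algebraMap R Asub) with hJdef
  have hmemA : ∀ a : R, a ∈ s → α a ∈ Asub := fun a ha =>
    Algebra.subset_adjoin ⟨a, ha, rfl⟩
  set β : {a // a ∈ s} → Asub := fun a => ⟨α a, hmemA a a.2⟩ with hβdef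
  set X : Ideal Asub := Ideal.span (Set.range β) with hXdef
  have hβpow : ∀ t : {a // a ∈ s}, (β t) ^ N = algebraMap R Asub t := by
    intro t
    apply Subtype.ext
    push_cast
    exact hα t
  -- `J ≤ X ^ N`
  have hsImem : ∀ a : R, a ∈ s → a ∈ I := by
    intro a ha
    rw [← hsI]
    exact Ideal.subset_span ha
  have hJX : J ≤ X ^ N := by
    rw [hJdef, ← hsI, Ideal.map_span, Ideal.span_le]
    rintro x ⟨a, ha, rfl⟩
    have h1 : β ⟨a, ha⟩ ∈ X := Ideal.subset_span ⟨⟨a, ha⟩, rfl⟩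
    have h2 := Ideal.pow_mem_pow h1 N
    rwa [hβpow ⟨a, ha⟩] at h2
  -- `X ≤ J.radical`
  have hXH : X ≤ J.radical := by
    rw [hXdef, Ideal.span_le]
    rintro x ⟨t, rfl⟩
    refine ⟨N, ?_⟩
    rw [hβpow t]
    exact Ideal.mem_map_of_mem _ (hsImem t t.2)
  -- `J ≠ ⊥`
  have hJne : J ≠ ⊥ := by
    obtain ⟨a, haI, ha0⟩ := Submodule.ne_bot_iff _ |>.mp hI0
    intro h
    have h1 : algebraMap R Asub a ∈ J := Ideal.mem_map_of_mem _ haI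
    rw [h] at h1
    have h2 : algebraMap R Asub a = 0 := Submodule.mem_bot _ |>.mp h1
    exact ha0 (hinj' (by rw [h2, map_zero]))
  -- decomposition: every element of `Asub` is a constant plus an element of `X`
  have hdecomp : ∀ h : Asub, ∃ c : R, h - algebraMap R Asub c ∈ X := by
    intro h
    induction h using Algebra.adjoin_induction' with
    | mem x hx =>
        refine ⟨0, ?_⟩
        rw [map_zero, sub_zero]
        obtain ⟨a, ha, rfl⟩ := hx
        exact Ideal.subset_span ⟨⟨a, ha⟩, rfl⟩
    | algebraMap r => exact ⟨r, by rw [sub_self]; exact Submodule.zero_mem X⟩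
    | add x y hx hy =>
        obtain ⟨c₁, hc₁⟩ := hx
        obtain ⟨c₂, hc₂⟩ := hy
        refine ⟨c₁ + c₂, ?_⟩
        rw [map_add]
        have : x + y - (algebraMap R Asub c₁ + algebraMap R Asub c₂)
            = (x - algebraMap R Asub c₁) + (y - algebraMap R Asub c₂) := by ring
        rw [this]
        exact Submodule.add_mem _ hc₁ hc₂
    | mul x y hx hy =>
        obtain ⟨c₁, hc₁⟩ := hx
        obtain ⟨c₂, hc₂⟩ := hy
        refine ⟨c₁ * c₂, ?_⟩
        rw [map_mul]
        have : x * y - algebraMap R Asub c₁ * algebraMap R Asub c₂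
            = (x - algebraMap R Asub c₁) * y
              + algebraMap R Asub c₁ * (y - algebraMap R Asub c₂) := by ring
        rw [this]
        exact Submodule.add_mem _ (Ideal.mul_mem_right _ _ hc₁) (Ideal.mul_mem_left _ _ hc₂)
  -- contraction of `J` is inside `I.radical`
  haveI : Algebra.IsIntegral R Asub := Algebra.IsIntegral.of_finite R Asub
  have hcomap : J.comap (algebraMap R Asub) ≤ I.radical := by
    rw [Ideal.radical_eq_sInf]
    refine le_sInf ?_
    rintro p ⟨hIp, hp⟩
    haveI := hp
    obtain ⟨Q, hQprime, hQcomap⟩ :=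
      Ideal.exists_ideal_over_prime_of_isIntegral_of_isDomain p
        (le_trans (le_of_eq (RingHom.injective_iff_ker_eq_bot _ |>.mp hinj')) bot_le)
    have hJQ : J ≤ Q := Ideal.map_le_iff_le_comap.mpr (by rw [hQcomap]; exact hIp)
    refine le_trans (Ideal.comap_mono hJQ) ?_
    rw [hQcomap]
  -- every element of `J.radical` is integral over `X`
  have hHX : ∀ h ∈ J.radical, h ∈ integralClosureOfIdeal X := by
    intro h hh
    obtain ⟨c, hc⟩ := hdecomp h
    have hcH : algebraMap R Asub c ∈ J.radical := by
      have e : algebraMap R Asub c = h - (h - algebraMap R Asub c) := by ring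
      rw [e]
      exact sub_mem hh (hXH hc)
    have hcrad : c ∈ I.radical := by
      have h1 : c ∈ (J.radical).comap (algebraMap R Asub) := hcH
      rw [Ideal.comap_radical] at h1
      have h2 := Ideal.radical_mono hcomap
      rw [Ideal.radical_idem] at h2
      exact h2 h1
    have hcN : c ^ N ∈ I := hradN (Ideal.pow_mem_pow hcrad N)
    have hcX : algebraMap R Asub c ∈ integralClosureOfIdeal X := by
      apply mem_cl_of_pow_mem hNpos
      rw [← map_pow]
      exact hJX (Ideal.mem_map_of_mem _ hcN)
    have e : h = (h - algebraMap R Asub c) + algebraMap R Asub c := by ring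
    rw [e]
    exact add_mem_cl (mem_cl_of_mem hc) hcX
  -- every element of `X` has its `N`-th power integral over `J`
  have hX1 : ∀ m ∈ X, m ^ N ∈ integralClosureOfIdeal J := by
    intro m hm
    rw [hXdef] at hm
    induction hm using Submodule.span_induction with
    | mem x hx =>
        obtain ⟨t, rfl⟩ := hx
        rw [hβpow t]
        exact mem_cl_of_mem (Ideal.mem_map_of_mem _ (hsImem t t.2))
    | zero =>
        rw [zero_pow hNpos.ne']
        exact mem_cl_of_mem (Submodule.zero_mem J)
    | add x y hx hy ihx ihy => exact add_pow_mem_cl hJne hNpos ihx ihy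
    | smul r x hx ih =>
        have e : (r • x) ^ N = r ^ N * x ^ N := by
          rw [smul_eq_mul, mul_pow]
        rw [e]
        exact mul_mem_cl ih (r ^ N)
  -- elements of `X ^ i` have `N`-th powers integral over `J ^ i`
  have hXi : ∀ (i : ℕ) (z : Asub), z ∈ X ^ i → z ^ N ∈ integralClosureOfIdeal (J ^ i) := by
    intro i z hz
    induction hz using Submodule.pow_induction_on_left' with
    | algebraMap r =>
        exact mem_cl_of_mem (by simp [Ideal.one_eq_top])
    | add x y i hx hy ihx ihy => exact add_pow_mem_cl (ideal_pow_ne_bot hJne i) hNpos ihx ihy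
    | mem_mul m hm i x hx ih =>
        rw [mul_pow, pow_succ']
        exact mul_mem_cl_mul (hX1 m hm) ih
  -- elements of `X ^ N` are integral over `J`
  have hXN : ∀ z ∈ X ^ N, z ∈ integralClosureOfIdeal J := by
    intro z hz
    exact mem_cl_of_pow_mem_cl_pow hJne hNpos (hXi N z hz)
  -- final assembly
  refine ⟨AA, J.radical, N, 1, hNpos, one_pos, ?_, rfl⟩
  rw [pow_one]
  apply Set.Subset.antisymm
  · -- `cl (H ^ N) ⊆ cl J`
    intro z hz
    refine cl_trans ?_ hz
    intro w hw
    -- `w ∈ J.radical ^ N`: show `w ∈ cl J`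
    have hHXi : ∀ (i : ℕ) (z : Asub), z ∈ J.radical ^ i →
        z ∈ integralClosureOfIdeal (X ^ i) := by
      intro i z hzi
      induction hzi using Submodule.pow_induction_on_left' with
      | algebraMap r => exact mem_cl_of_mem (by simp [Ideal.one_eq_top])
      | add x y i hx hy ihx ihy => exact add_mem_cl ihx ihy
      | mem_mul m hm i x hx ih =>
          rw [pow_succ']
          exact mul_mem_cl_mul (hHX m hm) ih
    exact cl_trans (fun u hu => hXN u hu) (hHXi N w hw)
  · -- `cl J ⊆ cl (H ^ N)`
    apply cl_mono
    exact le_trans hJX (ideal_pow_mono hXH N)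
end

section
/- Let R be a Noetherian domain of Krull dimension one with quotient field F, I a nonzero proper ideal of R, L a finite algebraic extension field of F, and E the integral closure of R in L. Suppose there exist distinct maximal ideals N₁,…,Nₙ of E and positive integers k₁,…,kₙ, h with IE = (N₁^{k₁} ⋯ Nₙ^{kₙ})^h. Then there exists a module-finite integral extension domain A of R with quotient field L and an ideal H of A such that (H^h)_a = (IA)_a. -/
open Pointwise

set_option synthInstance.maxHeartbeats 1000000
set_option maxHeartbeats 1000000

private lemma setFinitePow {M : Type*} [Monoid M] {s : Set M} (hs : s.Finite) :
    ∀ n : ℕ, (s ^ n).Finite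
  | 0 => by rw [pow_zero]; exact Set.finite_one
  | n+1 => by rw [pow_succ]; exact (setFinitePow hs n).mul hs

private lemma exists_fg_le_pow_mem {E : Type*} [CommRing E] (J : Ideal E) :
    ∀ (h : ℕ) (g : E), g ∈ J ^ h → ∃ J' : Ideal E, J'.FG ∧ J' ≤ J ∧ g ∈ J' ^ h
  | 0, g, hg => ⟨⊥, Submodule.fg_bot, bot_le, by simpa using hg⟩
  | (h+1), g, hg => by
    rw [pow_succ] at hg
    refine Submodule.mul_induction_on hg ?_ ?_
    · intro a ha b hb
      obtain ⟨J', hfg, hle, hmem⟩ := exists_fg_le_pow_mem J h a ha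
      refine ⟨J' ⊔ Ideal.span {b}, Submodule.FG.sup hfg ?_, ?_, ?_⟩
      · exact Submodule.fg_span (Set.finite_singleton b)
      · exact sup_le hle (Ideal.span_le.mpr (Set.singleton_subset_iff.mpr hb))
      · rw [pow_succ]
        exact Ideal.mul_mem_mul (Ideal.pow_right_mono le_sup_left h hmem)
          (le_sup_right (α := Ideal E) (Ideal.mem_span_singleton_self b))
    · rintro x y ⟨J1, h1, l1, m1⟩ ⟨J2, h2, l2, m2⟩
      exact ⟨J1 ⊔ J2, Submodule.FG.sup h1 h2, sup_le l1 l2,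
        Submodule.add_mem _ (Ideal.pow_right_mono le_sup_left _ m1)
          (Ideal.pow_right_mono le_sup_right _ m2)⟩

private lemma exists_fg_forall_mem {E ι : Type*} [CommRing E] (J : Ideal E) (h : ℕ)
    (G : Finset ι) (f : ι → E) (hf : ∀ g ∈ G, f g ∈ J ^ h) :
    ∃ J' : Ideal E, J'.FG ∧ J' ≤ J ∧ ∀ g ∈ G, f g ∈ J' ^ h := by
  classical
  induction G using Finset.induction with
  | empty => exact ⟨⊥, Submodule.fg_bot, bot_le, by simp⟩
  | @insert a s ha ih =>
    obtain ⟨J1, f1, l1, m1⟩ := ih (fun g hg => hf g (Finset.mem_insert_of_mem hg))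
    obtain ⟨J2, f2, l2, m2⟩ := exists_fg_le_pow_mem J h (f a) (hf a (Finset.mem_insert_self a s))
    refine ⟨J1 ⊔ J2, Submodule.FG.sup f1 f2, sup_le l1 l2, ?_⟩
    intro g hg
    rcases Finset.mem_insert.mp hg with rfl | hg
    · exact Ideal.pow_right_mono le_sup_right h m2
    · exact Ideal.pow_right_mono le_sup_left h (m1 g hg)

/-- Lemma 2.6: Let R be a Noetherian domain of Krull dimension one with
quotient field F, I a nonzero proper ideal of R, L a finite algebraic extension field
of F, and E the integral closure of R in L. Suppose there exist distinct maximal ideals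
N₁,…,Nₙ of E and positive integers k₁,…,kₙ, h with IE = (N₁^{k₁} ⋯ Nₙ^{kₙ})^h.
Then there exists a module-finite integral extension domain A of R with quotient field
L and an ideal H of A such that (H^h)_a = (IA)_a. -/
theorem stmt10 {R : Type*} [CommRing R] [IsDomain R] [IsNoetherianRing R]
    (hdim : ringKrullDim R = 1)
    (I : Ideal R) (hI0 : I ≠ ⊥) (hItop : I ≠ ⊤)
    (L : Type*) [Field L] [Algebra R L] [Algebra (FractionRing R) L]
    [IsScalarTower R (FractionRing R) L] [FiniteDimensional (FractionRing R) L]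
    {n : ℕ} (N : Fin n → Ideal (integralClosure R L))
    (hNinj : Function.Injective N) (hNmax : ∀ i, (N i).IsMaximal)
    (k : Fin n → ℕ) (hk : ∀ i, 0 < k i) (h : ℕ) (hh : 0 < h)
    (hIE : I.map (algebraMap R (integralClosure R L)) = (∏ i, N i ^ k i) ^ h) :
    ∃ A : Subalgebra R L, Module.Finite R A ∧ Algebra.IsIntegral R A ∧
      IsFractionRing A L ∧
      ∃ H : Ideal A, integralClosureOfIdeal (H ^ h) =
        integralClosureOfIdeal (I.map (algebraMap R A)) := by
  classical
  have hinjRL : Function.Injective (algebraMap R L) := by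
    rw [IsScalarTower.algebraMap_eq R (FractionRing R) L]
    exact (algebraMap (FractionRing R) L).injective.comp (IsFractionRing.injective R _)
  obtain ⟨G, hG⟩ : I.FG := IsNoetherian.noetherian I
  have hmemJh : ∀ g ∈ G, algebraMap R (integralClosure R L) g ∈ (∏ i, N i ^ k i) ^ h := by
    intro g hg
    rw [← hIE]
    exact Ideal.mem_map_of_mem _ (hG ▸ Ideal.subset_span hg)
  obtain ⟨J', hJfg, hJle, hJmem⟩ :=
    exists_fg_forall_mem (∏ i, N i ^ k i) h G (algebraMap R (integralClosure R L)) hmemJh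
  obtain ⟨X, hX⟩ := hJfg
  have hIJ : I.map (algebraMap R (integralClosure R L)) = J' ^ h := by
    refine le_antisymm ?_ ?_
    · rw [← hG, Ideal.map_span, Ideal.span_le]
      rintro _ ⟨g, hg, rfl⟩
      exact hJmem g hg
    · rw [hIE]; exact Ideal.pow_right_mono hJle h
  set M : Set (integralClosure R L) := (↑X : Set (integralClosure R L)) ^ h with hM
  have hMfin : M.Finite := setFinitePow X.finite_toSet h
  haveI : Finite ↥M := hMfin.to_subtype
  have hMsub : ∀ m ∈ M, m ∈ I.map (algebraMap R (integralClosure R L)) := by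
    intro m hm
    have hXpow : J' ^ h = Ideal.span ((↑X : Set (integralClosure R L)) ^ h) := by
      rw [← hX]; exact Submodule.span_pow _ h
    rw [hIJ, hXpow]
    exact Ideal.subset_span hm
  -- coefficients expressing generators of I in terms of monomials
  have hcA : ∀ g ∈ G, ∃ (p : ℕ) (c : Fin p → integralClosure R L) (m : Fin p → M),
      (∑ i, c i • (m i : integralClosure R L)) = algebraMap R (integralClosure R L) g := by
    intro g hg
    have hXpow : J' ^ h = Ideal.span ((↑X : Set (integralClosure R L)) ^ h) := by
      rw [← hX]; exact Submodule.span_pow _ h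
    have h1 := hJmem g hg
    rw [hXpow] at h1
    obtain ⟨p, c, m, hsum⟩ := Submodule.mem_span_set'.mp h1
    exact ⟨p, c, m, hsum⟩
  choose pA cA mA hcA using hcA
  -- coefficients expressing monomials in terms of generators of I
  have hcB : ∀ m ∈ M, ∃ (p : ℕ) (c : Fin p → integralClosure R L) (t : Fin p → G),
      (∑ i, c i • algebraMap R (integralClosure R L) ((t i : R))) = m := by
    intro m hm
    have h1 := hMsub m hm
    rw [← hG, Ideal.map_span] at h1
    obtain ⟨p, c, u, hsum⟩ := Submodule.mem_span_set'.mp h1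
    choose t ht1 ht2 using fun i => (u i).2
    refine ⟨p, c, fun i => ⟨t i, ht1 i⟩, ?_⟩
    rw [← hsum]
    exact Finset.sum_congr rfl fun i _ => by rw [ht2 i]
  choose pB cB tB hcB using hcB
  -- integral multiples of a basis
  obtain ⟨y0, hy0, hy⟩ := exists_integral_multiples R (FractionRing R)
      (Finset.univ.image (Module.finBasis (FractionRing R) L))
  -- the generating set
  set S : Set L :=
    (Set.range fun i => y0 • Module.finBasis (FractionRing R) L i)
    ∪ ((↑) '' (↑X : Set (integralClosure R L)))
    ∪ (⋃ g : ↥G, Set.range fun i => ((cA g.1 g.2 i : integralClosure R L) : L))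
    ∪ (⋃ m : ↥M, Set.range fun i => ((cB m.1 m.2 i : integralClosure R L) : L)) with hS
  have hSfin : S.Finite :=
    (((Set.finite_range _).union (X.finite_toSet.image _)).union
      (Set.finite_iUnion fun _ => Set.finite_range _)).union
      (Set.finite_iUnion fun _ => Set.finite_range _)
  have hSint : ∀ x ∈ S, IsIntegral R x := by
    rintro x (((hx | hx) | hx) | hx)
    · obtain ⟨i, rfl⟩ := hx
      exact hy _ (Finset.mem_image_of_mem _ (Finset.mem_univ i))
    · obtain ⟨e, he, rfl⟩ := hx
      exact e.2
    · obtain ⟨g, hgx⟩ := Set.mem_iUnion.mp hx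
      obtain ⟨i, rfl⟩ := hgx
      exact (cA g.1 g.2 i).2
    · obtain ⟨m, hmx⟩ := Set.mem_iUnion.mp hx
      obtain ⟨i, rfl⟩ := hmx
      exact (cB m.1 m.2 i).2
  have hfgA : Subalgebra.toSubmodule (Algebra.adjoin R S) |>.FG := fg_adjoin_of_finite hSfin hSint
  have hfinA : Module.Finite R (Algebra.adjoin R S) := Module.Finite.iff_fg.mpr hfgA
  haveI := hfinA
  have hintA : Algebra.IsIntegral R (Algebra.adjoin R S) := Algebra.IsIntegral.of_finite R _
  have hYS : ∀ i, (y0 • Module.finBasis (FractionRing R) L i) ∈ S := fun i =>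
    Set.mem_union_left _ (Set.mem_union_left _ (Set.mem_union_left _ ⟨i, rfl⟩))
  have hXS : ∀ e : integralClosure R L, e ∈ (↑X : Set (integralClosure R L)) → (e : L) ∈ S :=
    fun e he => Set.mem_union_left _ (Set.mem_union_left _ (Set.mem_union_right _ ⟨e, he, rfl⟩))
  have hcAS : ∀ (g : R) (hg : g ∈ G) (i : Fin (pA g hg)), ((cA g hg i : L)) ∈ S :=
    fun g hg i => Set.mem_union_left _ (Set.mem_union_right _
      (Set.mem_iUnion.mpr ⟨⟨g, hg⟩, ⟨i, rfl⟩⟩))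
  have hcBS : ∀ (m : integralClosure R L) (hm : m ∈ M) (i : Fin (pB m hm)),
      ((cB m hm i : L)) ∈ S :=
    fun m hm i => Set.mem_union_right _ (Set.mem_iUnion.mpr ⟨⟨m, hm⟩, ⟨i, rfl⟩⟩)
  have hfrac : IsFractionRing (Algebra.adjoin R S) L := by
    have hcoeA : ∀ a : Algebra.adjoin R S, algebraMap (Algebra.adjoin R S) L a = (a : L) :=
      fun a => rfl
    refine ⟨fun v => ?_, fun z => ?_, fun {x y} hxy => ?_⟩
    · rw [isUnit_iff_ne_zero, hcoeA]
      intro h0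
      have hv0 : (v : Algebra.adjoin R S) = 0 := Subtype.ext h0
      have h1 : (1 : Algebra.adjoin R S) * (v : Algebra.adjoin R S) = 0 := by
        rw [hv0, mul_zero]
      have h2 := (mem_nonZeroDivisors_iff.mp v.2).2 1 h1
      exact one_ne_zero (α := L) (by simpa using congrArg Subtype.val h2)
    · obtain ⟨D, hD⟩ := IsLocalization.exist_integer_multiples (nonZeroDivisors R)
        Finset.univ (fun i => (Module.finBasis (FractionRing R) L).repr z i)
      choose t ht using fun i => hD i (Finset.mem_univ i)
      have key : ((D : R) * y0) • z
          = ∑ i, (t i) • (y0 • Module.finBasis (FractionRing R) L i) := by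
        conv_lhs => rw [← Module.Basis.sum_repr (Module.finBasis (FractionRing R) L) z]
        rw [Finset.smul_sum]
        refine Finset.sum_congr rfl fun i _ => ?_
        have hDi : ((D : R)) • ((Module.finBasis (FractionRing R) L).repr z i
            • Module.finBasis (FractionRing R) L i)
            = (t i) • Module.finBasis (FractionRing R) L i := by
          rw [← smul_assoc, ← ht i, algebraMap_smul]
        rw [mul_comm, mul_smul, hDi, smul_comm]
      have hmemA : ((D : R) * y0) • z ∈ Algebra.adjoin R S := by
        rw [key]
        exact Subalgebra.sum_mem _ fun i _ => Subalgebra.smul_mem _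
          (Algebra.subset_adjoin (hYS i)) _
      have hDy0L : algebraMap R L ((D : R) * y0) ≠ 0 := by
        intro hcon
        have : ((D : R) * y0) = 0 := hinjRL (by simpa using hcon)
        exact (mul_ne_zero (nonZeroDivisors.ne_zero D.2) hy0) this
      refine ⟨⟨⟨((D : R) * y0) • z, hmemA⟩,
        ⟨⟨algebraMap R L ((D : R) * y0), Subalgebra.algebraMap_mem _ _⟩, ?_⟩⟩, ?_⟩
      · rw [mem_nonZeroDivisors_iff_right]
        intro x hx
        -- nonZeroDivisors membership
        have hx' : (x : L) * algebraMap R L ((D : R) * y0) = 0 := by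
          simpa using congrArg Subtype.val hx
        rcases mul_eq_zero.mp hx' with h1 | h1
        · exact Subtype.ext h1
        · exact absurd h1 hDy0L
      · rw [hcoeA, hcoeA]
        simp only [Algebra.smul_def]
        ring
    · refine ⟨1, ?_⟩
      have : x = y := Subtype.ext (by rw [← hcoeA, ← hcoeA, hxy])
      rw [this]
  refine ⟨Algebra.adjoin R S, hfinA, hintA, hfrac, ?_⟩
  set A := Algebra.adjoin R S with hAdef
  set H : Ideal A := Ideal.span {a : A | (a : L) ∈ (↑) '' (↑X : Set (integralClosure R L))}
    with hH
  refine ⟨H, ?_⟩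
  have hmon : ∀ m : integralClosure R L, m ∈ M →
      ∃ (hm : (m : L) ∈ A), (⟨(m : L), hm⟩ : A) ∈ H ^ h := by
    intro m hm
    rw [hM] at hm
    obtain ⟨f, hf⟩ := Set.mem_pow.mp hm
    have hfprod : (m : integralClosure R L) = ∏ j, (f j : integralClosure R L) := by
      rw [← hf, List.prod_ofFn]
    have hv : ∀ j : Fin h, (((f j : integralClosure R L) : L)) ∈ A :=
      fun j => Algebra.subset_adjoin (hXS _ (f j).2)
    have hprodL : (((∏ j, (⟨((f j : integralClosure R L) : L), hv j⟩ : A) : A)) : L)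
        = (m : L) := by
      calc (((∏ j, (⟨((f j : integralClosure R L) : L), hv j⟩ : A) : A)) : L)
          = ∏ j, (((f j : integralClosure R L)) : L) := map_prod A.val _ Finset.univ
        _ = (((∏ j, (f j : integralClosure R L) : integralClosure R L)) : L) :=
            (map_prod (integralClosure R L).val _ Finset.univ).symm
        _ = (m : L) := by rw [← hfprod]
    have hvH : ∀ j, (⟨((f j : integralClosure R L) : L), hv j⟩ : A) ∈ H := fun j =>
      Ideal.subset_span ⟨(f j : integralClosure R L), (f j).2, rfl⟩
    have hP : ((∏ j, (⟨((f j : integralClosure R L) : L), hv j⟩ : A) : A)) ∈ H ^ h := by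
      have hpp := Ideal.prod_mem_prod (s := (Finset.univ : Finset (Fin h)))
        (I := fun _ => H)
        (x := fun j => (⟨((f j : integralClosure R L) : L), hv j⟩ : A)) (fun j _ => hvH j)
      simpa [Finset.prod_const] using hpp
    have hmA2 : (m : L) ∈ A := by
      rw [← hprodL]
      exact ((∏ j, (⟨((f j : integralClosure R L) : L), hv j⟩ : A) : A)).2
    refine ⟨hmA2, ?_⟩
    have heq2 : (⟨(m : L), hmA2⟩ : A)
        = ((∏ j, (⟨((f j : integralClosure R L) : L), hv j⟩ : A) : A)) :=
      Subtype.ext hprodL.symm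
    rw [heq2]; exact hP
  have hle1 : I.map (algebraMap R A) ≤ H ^ h := by
    rw [← hG, Ideal.map_span, Ideal.span_le]
    rintro _ ⟨g, hg, rfl⟩
    have hgG : g ∈ G := hg
    have hcAA : ∀ i, ((cA g hgG i : L)) ∈ A := fun i => Algebra.subset_adjoin (hcAS g hgG i)
    choose hmemA hmemH using fun i => hmon (mA g hgG i) (mA g hgG i).2
    have hsum : algebraMap R A g = ∑ i, (⟨(cA g hgG i : L), hcAA i⟩ : A) *
        ⟨((mA g hgG i : integralClosure R L) : L), hmemA i⟩ := by
      apply Subtype.ext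
      have hEq := congrArg Subtype.val (hcA g hgG)
      simp only [AddSubmonoidClass.coe_finset_sum, smul_eq_mul, MulMemClass.coe_mul,
        Subalgebra.coe_algebraMap] at hEq
      simp only [AddSubmonoidClass.coe_finset_sum, MulMemClass.coe_mul,
        Subalgebra.coe_algebraMap]
      exact hEq.symm
    rw [hsum]
    exact Submodule.sum_mem _ fun i _ => Ideal.mul_mem_left _ _ (hmemH i)
  have hle2 : H ^ h ≤ I.map (algebraMap R A) := by
    have hHpow : H ^ h = Ideal.span
        (({a : A | (a : L) ∈ Subtype.val '' (↑X : Set (integralClosure R L))}) ^ h) := by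
      rw [hH]; exact Submodule.span_pow _ h
    rw [hHpow, Ideal.span_le]
    intro a ha
    obtain ⟨f, hf⟩ := Set.mem_pow.mp ha
    choose e he1 he2 using fun j => (f j).2
    have hmM : (∏ j, e j) ∈ M := by
      rw [hM]
      refine Set.mem_pow.mpr ⟨fun j => ⟨e j, he1 j⟩, ?_⟩
      rw [List.prod_ofFn]
    have hcoe : (((∏ j, e j : integralClosure R L)) : L) = (a : L) := by
      calc (((∏ j, e j : integralClosure R L)) : L) = ∏ j, ((e j : L)) :=
            map_prod (integralClosure R L).val _ Finset.univ
        _ = ∏ j, (((f j : A)) : L) := Finset.prod_congr rfl fun j _ => he2 j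
        _ = (((∏ j, (f j : A) : A)) : L) := (map_prod A.val _ Finset.univ).symm
        _ = (a : L) := by rw [← hf, List.prod_ofFn]
    have hcBA : ∀ i, ((cB (∏ j, e j) hmM i : L)) ∈ A := fun i =>
      Algebra.subset_adjoin (hcBS _ hmM i)
    have hsum : a = ∑ i, (⟨(cB (∏ j, e j) hmM i : L), hcBA i⟩ : A) *
        algebraMap R A ((tB (∏ j, e j) hmM i : R)) := by
      apply Subtype.ext
      have hEq := congrArg Subtype.val (hcB (∏ j, e j) hmM)
      simp only [AddSubmonoidClass.coe_finset_sum, smul_eq_mul, MulMemClass.coe_mul,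
        Subalgebra.coe_algebraMap] at hEq
      simp only [AddSubmonoidClass.coe_finset_sum, MulMemClass.coe_mul,
        Subalgebra.coe_algebraMap]
      rw [← hcoe, ← hEq]
    rw [hsum]
    refine Submodule.sum_mem _ fun i _ => Ideal.mul_mem_left _ _ (Ideal.mem_map_of_mem _ ?_)
    rw [← hG]
    exact Ideal.subset_span (tB (∏ j, e j) hmM i).2
  have hkey : H ^ h = I.map (algebraMap R A) := le_antisymm hle2 hle1
  rw [hkey]
end

section
/- Let R be an integrally closed Noetherian domain, b a nonzero nonunit of R, p₁,…,pₙ the height-one prime divisors of bR, and J = p₁ ∩ ⋯ ∩ pₙ. Assume bR = p₁^{(m)} ∩ ⋯ ∩ pₙ^{(m)} for a positive integer m (symbolic powers). If (J^k)_a = cR is principal for some positive integer k and c ∈ R, then the set of height-one primes containing cR is exactly {p₁,…,pₙ}. -/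
/-- A height-one prime ideal: a nonzero prime whose only strictly smaller prime is ⊥. -/
def IsHeightOnePrime {R : Type*} [CommRing R] (p : Ideal R) : Prop :=
  p.IsPrime ∧ p ≠ ⊥ ∧ ∀ q : Ideal R, q.IsPrime → q < p → q = ⊥

/-- The m-th symbolic power `p^{(m)} = p^m R_p ∩ R` of a prime ideal `p`,
described elementwise. -/
def symbolicPower {R : Type*} [CommRing R] (p : Ideal R) (m : ℕ) : Set R :=
  {x | ∃ s, s ∉ p ∧ s * x ∈ p ^ m}

/-- Let R be an integrally closed Noetherian domain, b a nonzero nonunit,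
p₁,…,pₙ the height-one prime divisors of bR, J = p₁ ∩ ⋯ ∩ pₙ, and suppose
bR = p₁^{(m)} ∩ ⋯ ∩ pₙ^{(m)}. If (J^k)_a = cR is principal for some k > 0 and c ∈ R,
then the set of height-one primes containing cR is exactly {p₁,…,pₙ}. -/
theorem stmt12 {R : Type*} [CommRing R] [IsDomain R] [IsIntegrallyClosed R]
    [IsNoetherianRing R] (b : R) (hb0 : b ≠ 0) (hbu : ¬ IsUnit b)
    {n : ℕ} (p : Fin n → Ideal R) (hpinj : Function.Injective p)
    (hp1 : ∀ i, IsHeightOnePrime (p i))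
    (hdiv : ∀ q : Ideal R, (IsHeightOnePrime q ∧ b ∈ q) ↔ ∃ i, q = p i)
    (m : ℕ) (hm : 0 < m)
    (hbm : (Ideal.span {b} : Set R) = ⋂ i, symbolicPower (p i) m)
    (J : Ideal R) (hJ : J = ⨅ i, p i)
    (k : ℕ) (hk : 0 < k) (c : R)
    (hc : integralClosureOfIdeal (J ^ k) = (Ideal.span {c} : Ideal R)) :
    ∀ q : Ideal R, IsHeightOnePrime q → (c ∈ q ↔ ∃ i, q = p i) := by
  -- J^k is contained in its integral closure, hence in span {c}
  have hJkc : J ^ k ≤ Ideal.span {c} := by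
    intro x hx
    have hxm : x ∈ integralClosureOfIdeal (J ^ k) := by
      refine ⟨1, one_pos, fun _ => -x, ?_, ?_⟩
      · intro i hi
        simp only [Finset.Icc_self, Finset.mem_singleton] at hi
        subst hi
        simpa using neg_mem hx
      · simp
    rwa [hc] at hxm
  -- c is integral over J^k, hence c ∈ J
  have hcJ : c ∈ J := by
    have hcm : c ∈ integralClosureOfIdeal (J ^ k) := by
      rw [hc]; exact Ideal.mem_span_singleton_self c
    obtain ⟨N, hN, a, ha, heq⟩ := hcm
    have hpow : c ^ N ∈ J := by
      have hEq : c ^ N = -∑ i ∈ Finset.Icc 1 N, a i * c ^ (N - i) :=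
        eq_neg_of_add_eq_zero_left heq
      rw [hEq]
      refine neg_mem (Ideal.sum_mem _ fun i hi => ?_)
      have h1 : (1 : ℕ) ≤ i := (Finset.mem_Icc.mp hi).1
      have hai : a i ∈ J := by
        have h2 : (J ^ k) ^ i ≤ J ^ k := Ideal.pow_le_self (by omega)
        exact Ideal.pow_le_self hk.ne' (h2 (ha i hi))
      exact Ideal.mul_mem_right _ _ hai
    rw [hJ] at hpow ⊢
    rw [Ideal.mem_iInf] at hpow ⊢
    exact fun i => (hp1 i).1.mem_of_pow_mem N (hpow i)
  intro q hq
  haveI : q.IsPrime := hq.1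
  constructor
  · intro hcq
    have hJq : J ≤ q := by
      have h3 : J ^ k ≤ q :=
        hJkc.trans ((Ideal.span_singleton_le_iff_mem q).mpr hcq)
      exact (Ideal.IsPrime.pow_le_iff hk.ne').mp h3
    have hprod : ∏ i, p i ≤ q := by
      refine le_trans (le_iInf fun i => ?_) (hJ ▸ hJq)
      exact le_trans Ideal.prod_le_inf (Finset.inf_le (Finset.mem_univ i))
    obtain ⟨i, -, hip⟩ := (Ideal.IsPrime.prod_le hq.1).mp hprod
    refine ⟨i, ?_⟩
    rcases hip.lt_or_eq with hlt | heq2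
    · exact absurd (hq.2.2 _ (hp1 i).1 hlt) (hp1 i).2.1
    · exact heq2.symm
  · rintro ⟨i, rfl⟩
    exact (hJ ▸ iInf_le p i : J ≤ p i) hcJ
end

section
/- Let D be a semilocal principal ideal domain with maximal ideals M₁,…,Mₙ and let I = ∏ᵢ Mᵢ^{eᵢ} be a nonzero proper ideal. If E is a Dedekind domain integral over D such that every maximal ideal N of E lying over Mᵢ satisfies Mᵢ E_N = N^{eᵢ*} E_N where eᵢ* = (e₁⋯eₙ)/eᵢ, then IE = J^{e₁⋯eₙ} where J is the Jacobson radical of E extended appropriately, i.e. J = ∩{N : N maximal in E lying over some Mᵢ}. -/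
open UniqueFactorizationMonoid

/-- Count of a prime in the normalized factorization of a finite product of nonzero ideals. -/
lemma count_nf_finset_prod {R : Type*} [CommRing R] [IsDedekindDomain R]
    [DecidableEq (Ideal R)] {ι : Type*} (s : Finset ι) (g : ι → Ideal R)
    (hg : ∀ i ∈ s, g i ≠ ⊥) (q : Ideal R) :
    (normalizedFactors (∏ i ∈ s, g i)).count q
      = ∑ i ∈ s, (normalizedFactors (g i)).count q := by
  classical
  induction s using Finset.induction with
  | empty => rw [Finset.prod_empty, normalizedFactors_one]; simp
  | @insert a s ha ih =>
    have h1 : g a ≠ 0 := hg a (Finset.mem_insert_self a s)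
    have h2 : (∏ i ∈ s, g i) ≠ 0 := by
      rw [Finset.prod_ne_zero_iff]
      exact fun i hi => hg i (Finset.mem_insert_of_mem hi)
    rw [Finset.prod_insert ha, normalizedFactors_mul h1 h2, Multiset.count_add,
      ih (fun i hi => hg i (Finset.mem_insert_of_mem hi)), Finset.sum_insert ha]

/-- (*1) of Remark 2.9.1: Let D be a semilocal PID with maximal ideals
M₁,…,Mₙ and I = ∏ᵢ Mᵢ^{eᵢ} a nonzero proper ideal. If E is a Dedekind domain integral
over D such that every maximal ideal N of E lying over Mᵢ has ramification index
eᵢ* = (e₁⋯eₙ)/eᵢ over Mᵢ, then IE = J^{e₁⋯eₙ}, where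
J = ∩{N : N maximal ideal of E lying over some Mᵢ}. -/
theorem stmt16 {D E : Type*} [CommRing D] [IsDomain D] [IsPrincipalIdealRing D]
    [CommRing E] [IsDomain E] [IsDedekindDomain E] [Algebra D E]
    (hinj : Function.Injective (algebraMap D E)) [Algebra.IsIntegral D E]
    {n : ℕ} (hn : 0 < n) (M : Fin n → Ideal D)
    (hMinj : Function.Injective M) (hMmax : ∀ i, (M i).IsMaximal)
    (hMall : ∀ Q : Ideal D, Q.IsMaximal → ∃ i, Q = M i)
    (e : Fin n → ℕ) (he : ∀ i, 0 < e i)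
    (I : Ideal D) (hI0 : I ≠ ⊥) (hItop : I ≠ ⊤) (hI : I = ∏ i, M i ^ e i)
    (hram : ∀ (i : Fin n) (N : Ideal E), N.IsMaximal →
      N.comap (algebraMap D E) = M i →
      Ideal.ramificationIdx' (M i) N = (∏ j, e j) / e i)
    (J : Ideal E)
    (hJ : J = sInf {N : Ideal E | N.IsMaximal ∧
      ∃ i, N.comap (algebraMap D E) = M i}) :
    Ideal.map (algebraMap D E) I = J ^ (∏ i, e i) := by
  classical
  set f := algebraMap D E with hf
  set S : Set (Ideal E) := {N : Ideal E | N.IsMaximal ∧ ∃ i, N.comap f = M i} with hSdef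
  -- basic facts
  have hIle : ∀ i, I ≤ M i := by
    intro i
    calc I ≤ M i ^ e i :=
          hI ▸ Ideal.le_of_dvd (Finset.dvd_prod_of_mem _ (Finset.mem_univ i))
      _ ≤ M i := Ideal.pow_le_self (he i).ne'
  have hfI0 : Ideal.map f I ≠ ⊥ :=
    fun h => hI0 ((Ideal.map_eq_bot_iff_of_injective hinj).mp h)
  have hM0 : ∀ i, M i ≠ ⊥ := by
    intro i h
    apply hI0
    rw [hI]
    apply Finset.prod_eq_zero (Finset.mem_univ i)
    rw [h, ← Ideal.zero_eq_bot]
    exact zero_pow (he i).ne'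
  have hMi0 : ∀ i, Ideal.map f (M i) ≠ ⊥ :=
    fun i h => hM0 i ((Ideal.map_eq_bot_iff_of_injective hinj).mp h)
  -- every maximal ideal of E is in S
  have hSmem : ∀ N : Ideal E, N.IsMaximal → N ∈ S := by
    intro N hN
    haveI := hN
    have hc := Ideal.isMaximal_comap_of_isIntegral_of_isMaximal (R := D) N
    obtain ⟨i, hi⟩ := hMall _ hc
    exact ⟨hN, i, hi⟩
  have hle : ∀ N ∈ S, Ideal.map f I ≤ N := by
    rintro N ⟨hN, i, hi⟩
    rw [Ideal.map_le_iff_le_comap, hi]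
    exact hIle i
  have hJle : Ideal.map f I ≤ J := hJ ▸ le_sInf hle
  have hJ0 : J ≠ ⊥ := fun h => hfI0 (le_bot_iff.mp (h ▸ hJle))
  -- finiteness of S
  haveI := UniqueFactorizationMonoid.fintypeSubtypeDvd (Ideal.map f I) hfI0
  have hdvdfin : {N : Ideal E | N ∣ Ideal.map f I}.Finite := by
    have : Finite {x : Ideal E // x ∣ Ideal.map f I} := Finite.of_fintype _
    exact Set.finite_coe_iff.mp this
  have hSfin : S.Finite :=
    hdvdfin.subset (fun N hN => Ideal.dvd_iff_le.mpr (hle N hN))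
  set T : Finset (Ideal E) := hSfin.toFinset with hT
  have hTmem : ∀ N, N ∈ T ↔ N ∈ S := fun N => hSfin.mem_toFinset
  have hT0 : ∀ N ∈ T, N ≠ ⊥ := by
    intro N hN h
    exact hfI0 (le_bot_iff.mp (h ▸ hle N ((hTmem N).mp hN)))
  have hTprime : ∀ N ∈ T, Prime N := by
    intro N hN
    exact Ideal.prime_of_isPrime (hT0 N hN) ((hTmem N).mp hN).1.isPrime
  -- J as a product of the distinct maximal ideals
  have hJprod : J = ∏ N ∈ T, N := by
    have h1 : (T.inf fun N => N ^ (1 : ℕ)) = ∏ N ∈ T, N ^ (1 : ℕ) :=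
      IsDedekindDomain.inf_prime_pow_eq_prod T id (fun _ => 1) hTprime
        (fun i _ j _ h => h)
    simp only [pow_one] at h1
    have h2 : T.inf id = sInf (↑T : Set (Ideal E)) := Finset.inf_id_eq_sInf T
    rw [hJ, ← hSfin.coe_toFinset, ← h2, ← h1]
    rfl
  set Pe : ℕ := ∏ i, e i with hPe
  have hPe0 : Pe ≠ 0 := by
    rw [hPe, Finset.prod_ne_zero_iff]
    exact fun i _ => (he i).ne'
  have hJPe0 : J ^ Pe ≠ ⊥ := pow_ne_zero _ hJ0
  -- reduce to equality of normalized factors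
  suffices h : normalizedFactors (Ideal.map f I) = normalizedFactors (J ^ Pe) by
    calc Ideal.map f I = (normalizedFactors (Ideal.map f I)).prod :=
          (prod_normalizedFactors_eq_self hfI0).symm
      _ = (normalizedFactors (J ^ Pe)).prod := by rw [h]
      _ = J ^ Pe := prod_normalizedFactors_eq_self hJPe0
  refine Multiset.ext.mpr fun q => ?_
  by_cases hq : q.IsPrime ∧ q ≠ ⊥ ∧ Ideal.map f I ≤ q
  · obtain ⟨hqp, hq0, hqle⟩ := hq
    haveI : q.IsPrime := hqp
    have hqmax : q.IsMaximal := Ideal.IsPrime.isMaximal hqp hq0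
    obtain ⟨j, hj⟩ : ∃ j, q.comap f = M j := (hSmem q hqmax).2
    -- LHS count
    have hmapI : Ideal.map f I = ∏ i, Ideal.map f (M i) ^ e i := by
      simp only [hI, ← Ideal.map_pow]
      exact map_prod (Ideal.mapHom f) _ _
    have hcount : ∀ i : Fin n,
        (normalizedFactors (Ideal.map f (M i))).count q
          = if i = j then Pe / e j else 0 := by
      intro i
      by_cases hij : i = j
      · subst hij
        rw [if_pos rfl,
          ← Ideal.IsDedekindDomain.ramificationIdx'_eq_normalizedFactors_count (hMi0 i) hqp hq0,
          hram i q hqmax hj]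
      · rw [if_neg hij, Multiset.count_eq_zero]
        intro hmem
        rw [Ideal.mem_normalizedFactors_iff (hMi0 i)] at hmem
        have : M i ≤ q.comap f := Ideal.map_le_iff_le_comap.mp hmem.2
        rw [hj] at this
        exact hij (hMinj ((hMmax i).eq_of_le (hMmax j).ne_top this))
    have hLHS : (normalizedFactors (Ideal.map f I)).count q = Pe := by
      rw [hmapI, count_nf_finset_prod _ _ (fun i _ => pow_ne_zero _ (hMi0 i))]
      have : ∀ i : Fin n, (normalizedFactors (Ideal.map f (M i) ^ e i)).count q
          = e i * (if i = j then Pe / e j else 0) := by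
        intro i
        rw [normalizedFactors_pow, Multiset.count_nsmul, hcount i]
      rw [Finset.sum_congr rfl fun i _ => this i,
        Finset.sum_eq_single j (fun i _ hij => by rw [if_neg hij, mul_zero])
          (fun h => absurd (Finset.mem_univ j) h)]
      rw [if_pos rfl]
      exact Nat.mul_div_cancel' (Finset.dvd_prod_of_mem e (Finset.mem_univ j))
    -- RHS count
    have hqT : q ∈ T := (hTmem q).mpr ⟨hqmax, j, hj⟩
    have hcntJ : (normalizedFactors J).count q = 1 := by
      refine Ideal.count_normalizedFactors_eq (n := 1) ?_ ?_
      · rw [pow_one, hJ]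
        exact sInf_le ⟨hqmax, j, hj⟩
      · intro hcon
        rw [hJprod, ← Finset.prod_erase_mul T _ hqT] at hcon
        have hdvd : q * q ∣ (∏ N ∈ T.erase q, N) * q := by
          rw [← pow_two]; exact Ideal.dvd_iff_le.mpr hcon
        have hq0' : q ≠ 0 := hq0
        have hqd : q ∣ ∏ N ∈ T.erase q, N :=
          (mul_dvd_mul_iff_right hq0').mp hdvd
        obtain ⟨N, hN, hqN⟩ :=
          (Prime.dvd_finset_prod_iff (hTprime q hqT) _).mp hqd
        have hNT : N ∈ T := Finset.mem_of_mem_erase hN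
        have : N = q := ((hTmem N).mp hNT).1.eq_of_le hqmax.ne_top
          (Ideal.le_of_dvd hqN)
        exact (Finset.ne_of_mem_erase hN) this
    have hRHS : (normalizedFactors (J ^ Pe)).count q = Pe := by
      rw [normalizedFactors_pow, Multiset.count_nsmul, hcntJ, mul_one]
    rw [hLHS, hRHS]
  · -- q is not a nonzero prime containing map f I: both counts are zero
    rw [Multiset.count_eq_zero_of_notMem, Multiset.count_eq_zero_of_notMem]
    · intro hmem
      rw [Ideal.mem_normalizedFactors_iff hJPe0] at hmem
      obtain ⟨hqp, hqle⟩ := hmem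
      have hJq : J ≤ q := hqp.le_of_pow_le hqle
      have hq0 : q ≠ ⊥ := fun h => hJ0 (le_bot_iff.mp (h ▸ hJq))
      exact hq ⟨hqp, hq0, le_trans hJle hJq⟩
    · intro hmem
      rw [Ideal.mem_normalizedFactors_iff hfI0] at hmem
      have hq0 : q ≠ ⊥ := fun h => hfI0 (le_bot_iff.mp (h ▸ hmem.2))
      exact hq ⟨hmem.1, hq0, hmem.2⟩
end
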